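/- Let κ, τ, H > 0 with κ − 4τ² > 0 and 4H² + κ > κ − 4τ² (equivalently 4H² + 4τ² > 0, which always holds). For x ∈ [0, arctan(√κ/(2H))] define λ(x) = √(1 − (4H²/κ)tan²x)/√(1 + (4τ²/κ)tan²x) and y(x) = −arctan((τ/H)λ(x)) − (H/τ)·(√(κ−4τ²)/√(4H²+κ))·artanh((√(κ−4τ²)/√(4H²+κ))λ(x)). Then for x in the open interval y'(x) = (H/τ) tan x · √(1 + (4τ²/κ)tan²x)/√(1 − (4H²/κ)tan²x). -/

import Mathlib

open Real

/-- The inverse hyperbolic tangent. -/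
noncomputable def artanh (x : ℝ) : ℝ := (1 / 2) * Real.log ((1 + x) / (1 - x))

lemma hasDerivAt_artanh_comp {f : ℝ → ℝ} {f' x : ℝ} (hf : HasDerivAt f f' x)
    (h1 : -1 < f x) (h2 : f x < 1) :
    HasDerivAt (fun x => _root_.artanh (f x)) (f' / (1 - f x ^ 2)) x := by
  have h1' : (0:ℝ) < 1 + f x := by linarith
  have h2' : (0:ℝ) < 1 - f x := by linarith
  have hq : HasDerivAt (fun x => (1 + f x) / (1 - f x))
      (((0 + f') * (1 - f x) - (1 + f x) * (0 - f')) / (1 - f x) ^ 2) x :=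
    ((hasDerivAt_const x (1:ℝ)).add hf).div ((hasDerivAt_const x (1:ℝ)).sub hf) h2'.ne'
  have hlog := (hq.log (by positivity)).const_mul (1/2 : ℝ)
  have : (fun x => _root_.artanh (f x)) = fun x => (1/2 : ℝ) * Real.log ((1 + f x) / (1 - f x)) := by
    funext z; simp [_root_.artanh]
  rw [this]
  convert hlog using 1
  case e'_4 => rfl
  case e'_5 => rfl
  have h3 : (1:ℝ) - f x ^ 2 ≠ 0 := by nlinarith
  field_simp
  ring

set_option maxHeartbeats 1600000 in
/-- Explicit profile of the CMC `H` sphere in the Berger sphere with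
`κ − 4τ² > 0`: its derivative on the open interval. -/
theorem profile_sphere_berger_artanh (κ τ H : ℝ) (hκ : 0 < κ) (hτ : 0 < τ)
    (hH : 0 < H) (hκτ : 0 < κ - 4 * τ ^ 2)
    (hlt : κ - 4 * τ ^ 2 < 4 * H ^ 2 + κ)
    (lam y : ℝ → ℝ)
    (hlam : ∀ x, lam x = Real.sqrt (1 - (4 * H ^ 2 / κ) * Real.tan x ^ 2) /
      Real.sqrt (1 + (4 * τ ^ 2 / κ) * Real.tan x ^ 2))
    (hy : ∀ x, y x = -Real.arctan ((τ / H) * lam x) -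
      (H / τ) * (Real.sqrt (κ - 4 * τ ^ 2) / Real.sqrt (4 * H ^ 2 + κ)) *
        _root_.artanh ((Real.sqrt (κ - 4 * τ ^ 2) / Real.sqrt (4 * H ^ 2 + κ)) * lam x)) :
    ∀ x ∈ Set.Ioo (0 : ℝ) (Real.arctan (Real.sqrt κ / (2 * H))),
      HasDerivAt y ((H / τ) * Real.tan x *
        Real.sqrt (1 + (4 * τ ^ 2 / κ) * Real.tan x ^ 2) /
        Real.sqrt (1 - (4 * H ^ 2 / κ) * Real.tan x ^ 2)) x := by
  have hlam' : lam = fun x => Real.sqrt (1 - (4 * H ^ 2 / κ) * Real.tan x ^ 2) /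
      Real.sqrt (1 + (4 * τ ^ 2 / κ) * Real.tan x ^ 2) := funext hlam
  subst hlam'
  have hy' := funext hy
  subst hy'
  rintro x ⟨hx0, hx1⟩
  -- basic facts about x and tan x
  set t := Real.tan x with htdef
  have hxlt : x < π / 2 := hx1.trans (Real.arctan_lt_pi_div_two _)
  have ht0 : 0 < t := Real.tan_pos_of_pos_of_lt_pi_div_two hx0 hxlt
  have hcos : Real.cos x ≠ 0 := by
    have := Real.cos_pos_of_mem_Ioo ⟨by linarith [Real.pi_pos], hxlt⟩
    exact this.ne'
  have htlt : t < Real.sqrt κ / (2 * H) := by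
    have := Real.tan_lt_tan_of_lt_of_lt_pi_div_two
      (x := x) (y := Real.arctan (Real.sqrt κ / (2 * H)))
      (by linarith [Real.pi_pos]) (Real.arctan_lt_pi_div_two _) hx1
    rwa [Real.tan_arctan] at this
  have hsk : Real.sqrt κ ^ 2 = κ := Real.sq_sqrt hκ.le
  have hA0 : 0 < 1 - (4 * H ^ 2 / κ) * t ^ 2 := by
    have h2 : t * (2 * H) < Real.sqrt κ := (lt_div_iff₀ (by positivity)).mp htlt
    have hnn : 0 ≤ t * (2 * H) := by positivity
    have h3 : t * (2 * H) * (t * (2 * H)) < κ := by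
      have h4 := mul_lt_mul'' h2 h2 hnn hnn
      rwa [Real.mul_self_sqrt hκ.le] at h4
    rw [sub_pos, div_mul_eq_mul_div, div_lt_one hκ]; nlinarith
  have hB0 : 0 < 1 + (4 * τ ^ 2 / κ) * t ^ 2 := by positivity
  set A := 1 - (4 * H ^ 2 / κ) * t ^ 2 with hAdef
  set B := 1 + (4 * τ ^ 2 / κ) * t ^ 2 with hBdef
  set s := Real.sqrt A with hsdef
  set r := Real.sqrt B with hrdef
  have hs0 : 0 < s := Real.sqrt_pos.2 hA0
  have hr0 : 0 < r := Real.sqrt_pos.2 hB0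
  have hs2 : s ^ 2 = A := Real.sq_sqrt hA0.le
  have hr2 : r ^ 2 = B := Real.sq_sqrt hB0.le
  have hsr : s < r := by
    have : A < B := by
      rw [hAdef, hBdef]
      have q1 : 0 < 4 * H ^ 2 / κ * t ^ 2 := by positivity
      have q2 : 0 < 4 * τ ^ 2 / κ * t ^ 2 := by positivity
      linarith
    exact Real.sqrt_lt_sqrt hA0.le this
  -- constant c
  set c := Real.sqrt (κ - 4 * τ ^ 2) / Real.sqrt (4 * H ^ 2 + κ) with hcdef
  have hc0 : 0 < c := by positivity
  have hc1 : c < 1 := by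
    rw [hcdef, div_lt_one (by positivity)]
    exact Real.sqrt_lt_sqrt hκτ.le hlt
  have hc2 : c ^ 2 = (κ - 4 * τ ^ 2) / (4 * H ^ 2 + κ) := by
    rw [hcdef, div_pow, Real.sq_sqrt hκτ.le, Real.sq_sqrt (by positivity)]
  -- derivative of tan
  have hd : HasDerivAt Real.tan (1 + t ^ 2) x := by
    have h := Real.hasDerivAt_tan hcos
    rwa [show 1 / Real.cos x ^ 2 = 1 + t ^ 2 by
      rw [← Real.inv_one_add_tan_sq hcos]; simp [htdef]] at h
  set d := 1 + t ^ 2 with hddef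
  have hd0 : 0 < d := by positivity
  -- derivative of A and B (as functions of x)
  have hAd : HasDerivAt (fun x => 1 - (4 * H ^ 2 / κ) * Real.tan x ^ 2)
      (0 - 4 * H ^ 2 / κ * (2 * t ^ 1 * d)) x :=
    (hasDerivAt_const x (1:ℝ)).sub (((hd.pow 2)).const_mul _)
  have hBd : HasDerivAt (fun x => 1 + (4 * τ ^ 2 / κ) * Real.tan x ^ 2)
      (0 + 4 * τ ^ 2 / κ * (2 * t ^ 1 * d)) x :=
    (hasDerivAt_const x (1:ℝ)).add (((hd.pow 2)).const_mul _)
  have hsd : HasDerivAt (fun x => Real.sqrt (1 - (4 * H ^ 2 / κ) * Real.tan x ^ 2))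
      ((0 - 4 * H ^ 2 / κ * (2 * t ^ 1 * d)) / (2 * s)) x := hAd.sqrt hA0.ne'
  have hrd : HasDerivAt (fun x => Real.sqrt (1 + (4 * τ ^ 2 / κ) * Real.tan x ^ 2))
      ((0 + 4 * τ ^ 2 / κ * (2 * t ^ 1 * d)) / (2 * r)) x := hBd.sqrt hB0.ne'
  set s' := (0 - 4 * H ^ 2 / κ * (2 * t ^ 1 * d)) / (2 * s) with hs'def
  set r' := (0 + 4 * τ ^ 2 / κ * (2 * t ^ 1 * d)) / (2 * r) with hr'def
  have hlamd : HasDerivAt (fun x => Real.sqrt (1 - (4 * H ^ 2 / κ) * Real.tan x ^ 2) /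
      Real.sqrt (1 + (4 * τ ^ 2 / κ) * Real.tan x ^ 2)) ((s' * r - s * r') / r ^ 2) x :=
    hsd.div hrd hr0.ne'
  set L' := (s' * r - s * r') / r ^ 2 with hL'def
  have hlamx : s / r < 1 := by rw [div_lt_one hr0]; exact hsr
  have hlampos : 0 < s / r := by positivity
  -- arctan part
  have h1 : HasDerivAt (fun x => -Real.arctan ((τ / H) *
      (Real.sqrt (1 - (4 * H ^ 2 / κ) * Real.tan x ^ 2) /
        Real.sqrt (1 + (4 * τ ^ 2 / κ) * Real.tan x ^ 2))))
      (-(1 / (1 + ((τ / H) * (s / r)) ^ 2) * ((τ / H) * L'))) x :=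
    ((hlamd.const_mul (τ / H)).arctan).neg
  -- artanh part
  have hcl1 : c * (s / r) < 1 := by
    calc c * (s / r) < 1 * 1 := by
          apply mul_lt_mul' hc1.le hlamx hlampos.le one_pos
    _ = 1 := by ring
  have hcl0 : -1 < c * (s / r) := by
    have := mul_pos hc0 hlampos; linarith
  have hat : HasDerivAt (fun x => _root_.artanh ((Real.sqrt (κ - 4 * τ ^ 2) / Real.sqrt (4 * H ^ 2 + κ)) *
      (Real.sqrt (1 - (4 * H ^ 2 / κ) * Real.tan x ^ 2) /
        Real.sqrt (1 + (4 * τ ^ 2 / κ) * Real.tan x ^ 2))))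
      ((c * L') / (1 - (c * (s / r)) ^ 2)) x :=
    hasDerivAt_artanh_comp (hlamd.const_mul c) hcl0 hcl1
  have h2 : HasDerivAt (fun x => (H / τ) * (Real.sqrt (κ - 4 * τ ^ 2) / Real.sqrt (4 * H ^ 2 + κ)) *
      _root_.artanh ((Real.sqrt (κ - 4 * τ ^ 2) / Real.sqrt (4 * H ^ 2 + κ)) *
      (Real.sqrt (1 - (4 * H ^ 2 / κ) * Real.tan x ^ 2) /
        Real.sqrt (1 + (4 * τ ^ 2 / κ) * Real.tan x ^ 2))))
      ((H / τ) * c * ((c * L') / (1 - (c * (s / r)) ^ 2))) x := hat.const_mul _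
  have hD := h1.sub h2
  convert hD using 1
  case e'_4 => rfl
  case e'_5 => rfl
  case e'_8 => rfl
  clear_value t A B s r c d s' r' L'
  -- now prove the equality of derivative values
  have hden2 : (0:ℝ) < 1 - (c * (s / r)) ^ 2 := by
    nlinarith [mul_pos (sub_pos.2 hcl1) (by linarith : (0:ℝ) < 1 + c * (s / r))]
  -- key algebraic identities
  have e1num : H ^ 2 * r ^ 2 + τ ^ 2 * s ^ 2 = H ^ 2 + τ ^ 2 := by
    rw [hs2, hr2, hAdef, hBdef]; field_simp [hκ.ne']; ring
  have e2num : (4 * H ^ 2 + κ) * r ^ 2 - (κ - 4 * τ ^ 2) * s ^ 2 = 4 * (H ^ 2 + τ ^ 2) * d := by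
    rw [hs2, hr2, hAdef, hBdef, hddef]; field_simp [hκ.ne']; ring
  have es2 : κ * (s' * s) = -(4 * H ^ 2 * (t * d)) := by
    rw [hs'def]
    field_simp [hs0.ne', hκ.ne']
    ring
  have er2 : κ * (r' * r) = 4 * τ ^ 2 * (t * d) := by
    rw [hr'def]
    field_simp [hr0.ne', hκ.ne']
    ring
  have eL : L' = -(4 * (H ^ 2 + τ ^ 2) * t * d) / (κ * s * r ^ 3) := by
    rw [hL'def, eq_div_iff (by positivity)]
    field_simp
    linear_combination r ^ 2 * es2 - s ^ 2 * er2 - 4 * t * d * e1num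
  have e1 : 1 + ((τ / H) * (s / r)) ^ 2 = (H ^ 2 + τ ^ 2) / (H ^ 2 * r ^ 2) := by
    rw [eq_div_iff (by positivity)]
    field_simp
    linear_combination e1num
  have e2 : 1 - (c * (s / r)) ^ 2 = (4 * (H ^ 2 + τ ^ 2) * d) / ((4 * H ^ 2 + κ) * r ^ 2) := by
    rw [eq_div_iff (by positivity), mul_pow, hc2]
    field_simp
    linear_combination e2num
  have hc2' : c ^ 2 * (4 * H ^ 2 + κ) = κ - 4 * τ ^ 2 := by
    rw [hc2]; exact div_mul_cancel₀ _ (by positivity)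
  have hr2k : κ * r ^ 2 = κ + 4 * τ ^ 2 * t ^ 2 := by
    rw [hr2, hBdef]; field_simp [hκ.ne']
  rw [e1, e2, eL]
  field_simp
  linear_combination hr2k - hc2' - 4 * τ ^ 2 * hddef
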